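/- Let n ≥ 4 be an even integer. On the open set {(z, t) ∈ ℂ^n × ℂ^{n+2} : z_1⋯z_n ≠ 1} with coordinates z_1,…,z_n, t_0,…,t_{n+1}, define W_0 = e^{t_1} z_1^2 z_n/(z_1⋯z_n − 1) + z_2 + Σ_{i=2}^{n−1} z_i z_{i+1} and W = t_0 + W_0 + Σ_{i=2}^{n} t_i W_0^i − 2 e^{t_1} t_n + t_{n+1} e^{t_1} z_1. Then the first-order differential operator Ẽ = n ∂_{t_1} + Σ_{i=0}^{n} (1−i) t_i ∂_{t_i} + (1 − n/2) t_{n+1} ∂_{t_{n+1}} − (n/2) z_1 ∂_{z_1} + Σ_{i=1}^{n/2} z_{2i} ∂_{z_{2i}} satisfies Ẽ(W) = W identically. -/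

import Mathlib

open Finset

/-- The mirror LG potential of the quadric with `q = e^{t₁}`:
`W₀ = e^{t₁} z₁² z_n/(z₁⋯z_n − 1) + z₂ + ∑_{i=2}^{n−1} z_i z_{i+1}`. -/
noncomputable def W0t (n : ℕ) (z t : ℕ → ℂ) : ℂ :=
  Complex.exp (t 1) * (z 1) ^ 2 * z n / ((∏ i ∈ Finset.Icc 1 n, z i) - 1)
    + z 2 + ∑ i ∈ Finset.Icc 2 (n - 1), z i * z (i + 1)

/-- The universal unfolding
`W = t₀ + W₀ + ∑_{i=2}^{n} t_i W₀^i − 2 e^{t₁} t_n + t_{n+1} e^{t₁} z₁`. -/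
noncomputable def Wunf (n : ℕ) (z t : ℕ → ℂ) : ℂ :=
  t 0 + W0t n z t + (∑ i ∈ Finset.Icc 2 n, t i * (W0t n z t) ^ i)
    - 2 * Complex.exp (t 1) * t n + t (n + 1) * Complex.exp (t 1) * z 1

private lemma ite_val {α : Type*} (z : ℕ → α) (k j : ℕ) :
    (if j = k then z k else z j) = z j := by
  split_ifs with h
  · rw [h]
  · rfl

private lemma W0t_deriv_z (n : ℕ) (z t : ℕ → ℂ)
    (hz : (∏ i ∈ Icc 1 n, z i) ≠ 1) (k : ℕ) (hk2 : 2 ≤ k) (hkn : k ≤ n) :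
    HasDerivAt (fun s => W0t n (Function.update z k s) t)
      (((if n = k then Complex.exp (t 1) * z 1 ^ 2 else 0) * ((∏ i ∈ Icc 1 n, z i) - 1)
          - Complex.exp (t 1) * z 1 ^ 2 * z n * (∏ i ∈ (Icc 1 n) \ {k}, z i))
          / ((∏ i ∈ Icc 1 n, z i) - 1) ^ 2
        + (if 2 = k then 1 else 0)
        + ((if k ∈ Icc 2 (n - 1) then z (k + 1) else 0)
          + (if k - 1 ∈ Icc 2 (n - 1) then z (k - 1) else 0))) (z k) := by
  have hkmem : k ∈ Icc 1 n := mem_Icc.mpr ⟨by omega, hkn⟩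
  have hD : (∏ i ∈ Icc 1 n, z i) - 1 ≠ 0 := sub_ne_zero.mpr hz
  have hQ : z k * ∏ i ∈ (Icc 1 n) \ {k}, z i = ∏ i ∈ Icc 1 n, z i := by
    rw [← Finset.erase_eq]; exact Finset.mul_prod_erase _ _ hkmem
  have hfun : (fun s => W0t n (Function.update z k s) t)
      = fun s => Complex.exp (t 1) * z 1 ^ 2 * (if n = k then s else z n)
            / (s * ∏ i ∈ (Icc 1 n) \ {k}, z i - 1)
          + (if 2 = k then s else z 2)
          + ∑ i ∈ Icc 2 (n - 1),
              (if i = k then s else z i) * (if i + 1 = k then s else z (i + 1)) := by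
    funext s
    simp only [W0t, Function.update_apply, if_neg (show ¬(1 = k) by omega)]
    rw [show (∏ x ∈ Icc 1 n, if x = k then s else z x) = s * ∏ i ∈ Icc 1 n \ {k}, z i from by
      rw [← Finset.prod_update_of_mem hkmem]
      exact Finset.prod_congr rfl fun x _ => (Function.update_apply z k s x).symm]
  rw [hfun]
  have hite : HasDerivAt (fun s : ℂ => if n = k then s else z n) (if n = k then 1 else 0) (z k) := by
    split_ifs with h
    exacts [hasDerivAt_id _, hasDerivAt_const _ _]
  have hnum := hite.const_mul (Complex.exp (t 1) * z 1 ^ 2)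
  have hden : HasDerivAt (fun s : ℂ => s * ∏ i ∈ (Icc 1 n) \ {k}, z i - 1)
      (∏ i ∈ (Icc 1 n) \ {k}, z i) (z k) := by
    simpa using ((hasDerivAt_id (z k)).mul_const (∏ i ∈ (Icc 1 n) \ {k}, z i)).sub_const 1
  have hdiv := hnum.fun_div hden (show z k * ∏ i ∈ (Icc 1 n) \ {k}, z i - 1 ≠ 0 by rw [hQ]; exact hD)
  have hz2 : HasDerivAt (fun s : ℂ => if 2 = k then s else z 2) (if 2 = k then 1 else 0) (z k) := by
    split_ifs with h
    exacts [hasDerivAt_id _, hasDerivAt_const _ _]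
  have hsum : HasDerivAt
      (fun s => ∑ i ∈ Icc 2 (n - 1), (if i = k then s else z i) * (if i + 1 = k then s else z (i + 1)))
      (∑ i ∈ Icc 2 (n - 1), ((if i = k then (1:ℂ) else 0) * z (i + 1) + z i * (if i + 1 = k then 1 else 0)))
      (z k) := by
    apply HasDerivAt.fun_sum
    intro i _
    have ha : HasDerivAt (fun s : ℂ => if i = k then s else z i) (if i = k then 1 else 0) (z k) := by
      split_ifs with h
      exacts [hasDerivAt_id _, hasDerivAt_const _ _]
    have hb : HasDerivAt (fun s : ℂ => if i + 1 = k then s else z (i + 1)) (if i + 1 = k then 1 else 0) (z k) := by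
      split_ifs with h
      exacts [hasDerivAt_id _, hasDerivAt_const _ _]
    simpa only [ite_val] using ha.fun_mul hb
  have htot := (hdiv.fun_add hz2).fun_add hsum
  refine htot.congr_deriv ?_
  symm
  have e1 : ∑ i ∈ Icc 2 (n - 1), ((if i = k then (1:ℂ) else 0) * z (i + 1) + z i * (if i + 1 = k then 1 else 0))
      = (if k ∈ Icc 2 (n - 1) then z (k + 1) else 0) + (if k - 1 ∈ Icc 2 (n - 1) then z (k - 1) else 0) := by
    rw [Finset.sum_add_distrib]
    congr 1
    · rw [← Finset.sum_ite_eq' (Icc 2 (n - 1)) k (fun i => z (i + 1))]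
      exact Finset.sum_congr rfl fun i _ => by split_ifs <;> ring
    · rw [← Finset.sum_ite_eq' (Icc 2 (n - 1)) (k - 1) (fun i => z i)]
      refine Finset.sum_congr rfl fun i _ => ?_
      simp only [mul_ite, mul_one, mul_zero]
      exact if_congr (by omega) rfl rfl
  rw [e1, hQ, ite_val, mul_ite, mul_one, mul_zero]
private lemma W0t_deriv_z1 (n : ℕ) (z t : ℕ → ℂ) (hn : 2 ≤ n)
    (hz : (∏ i ∈ Icc 1 n, z i) ≠ 1) :
    HasDerivAt (fun s => W0t n (Function.update z 1 s) t)
      ((Complex.exp (t 1) * (2 * z 1) * z n * ((∏ i ∈ Icc 1 n, z i) - 1)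
          - Complex.exp (t 1) * z 1 ^ 2 * z n * (∏ i ∈ (Icc 1 n) \ {1}, z i))
          / ((∏ i ∈ Icc 1 n, z i) - 1) ^ 2) (z 1) := by
  have h1mem : (1:ℕ) ∈ Icc 1 n := mem_Icc.mpr ⟨le_refl _, by omega⟩
  have hD : (∏ i ∈ Icc 1 n, z i) - 1 ≠ 0 := sub_ne_zero.mpr hz
  have hQ : z 1 * ∏ i ∈ (Icc 1 n) \ {1}, z i = ∏ i ∈ Icc 1 n, z i := by
    rw [← Finset.erase_eq]; exact Finset.mul_prod_erase _ _ h1mem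
  have hfun : (fun s => W0t n (Function.update z 1 s) t)
      = fun s => Complex.exp (t 1) * s ^ 2 * z n / (s * ∏ i ∈ (Icc 1 n) \ {1}, z i - 1)
          + z 2 + ∑ i ∈ Icc 2 (n - 1), z i * z (i + 1) := by
    funext s
    simp only [W0t, Function.update_apply, if_neg (show ¬(2 = 1) by omega),
      if_neg (show ¬(n = 1) by omega), if_pos rfl]
    rw [show (∏ x ∈ Icc 1 n, if x = 1 then s else z x) = s * ∏ i ∈ Icc 1 n \ {1}, z i from by
      rw [← Finset.prod_update_of_mem h1mem]
      exact Finset.prod_congr rfl fun x _ => (Function.update_apply z 1 s x).symm]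
    congr 1
    refine Finset.sum_congr rfl fun i hi => ?_
    simp only [mem_Icc] at hi
    rw [if_neg (show ¬(i = 1) by omega), if_neg (show ¬(i + 1 = 1) by omega)]
  rw [hfun]
  have hp : HasDerivAt (fun x : ℂ => x ^ 2) (2 * z 1) (z 1) := by
    simpa using hasDerivAt_pow 2 (z 1)
  have hnum : HasDerivAt (fun s : ℂ => Complex.exp (t 1) * s ^ 2 * z n)
      (Complex.exp (t 1) * (2 * z 1) * z n) (z 1) :=
    (hp.const_mul (Complex.exp (t 1))).mul_const (z n)
  have hden : HasDerivAt (fun s : ℂ => s * ∏ i ∈ (Icc 1 n) \ {1}, z i - 1)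
      (∏ i ∈ (Icc 1 n) \ {1}, z i) (z 1) := by
    simpa using ((hasDerivAt_id (z 1)).mul_const (∏ i ∈ (Icc 1 n) \ {1}, z i)).sub_const 1
  have hdiv := hnum.fun_div hden
    (show z 1 * ∏ i ∈ (Icc 1 n) \ {1}, z i - 1 ≠ 0 by rw [hQ]; exact hD)
  have htot := (hdiv.add_const (z 2)).add_const (∑ i ∈ Icc 2 (n - 1), z i * z (i + 1))
  refine htot.congr_deriv ?_
  symm
  rw [hQ]

private lemma W0t_update_t (n i : ℕ) (z t : ℕ → ℂ) (hi : i ≠ 1) (s : ℂ) :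
    W0t n z (Function.update t i s) = W0t n z t := by
  simp only [W0t, Function.update_of_ne (Ne.symm hi)]

private lemma W0t_deriv_t1 (n : ℕ) (z t : ℕ → ℂ) :
    HasDerivAt (fun s => W0t n z (Function.update t 1 s))
      (Complex.exp (t 1) * z 1 ^ 2 * z n / ((∏ i ∈ Icc 1 n, z i) - 1)) (t 1) := by
  have hfun : (fun s => W0t n z (Function.update t 1 s))
      = fun s => Complex.exp s * z 1 ^ 2 * z n / ((∏ i ∈ Icc 1 n, z i) - 1)
          + z 2 + ∑ i ∈ Icc 2 (n - 1), z i * z (i + 1) := by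
    funext s
    simp only [W0t, Function.update_self]
  rw [hfun]
  exact (((((Complex.hasDerivAt_exp (t 1)).mul_const (z 1 ^ 2)).mul_const (z n)).div_const
    ((∏ i ∈ Icc 1 n, z i) - 1)).add_const (z 2)).add_const _

/-- derivative of the unfolding in `t i` for `i ≠ 1`. -/
private lemma Wunf_deriv_t (n : ℕ) (z t : ℕ → ℂ) (hn : 2 ≤ n) (i : ℕ) (hi : i ≠ 1) :
    HasDerivAt (fun s => Wunf n z (Function.update t i s))
      ((if 0 = i then (1:ℂ) else 0)
        + (∑ j ∈ Icc 2 n, (if j = i then (1:ℂ) else 0) * W0t n z t ^ j)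
        - (if n = i then 2 * Complex.exp (t 1) else 0)
        + (if n + 1 = i then Complex.exp (t 1) * z 1 else 0)) (t i) := by
  have hfun : (fun s => Wunf n z (Function.update t i s))
      = fun s => (if 0 = i then s else t 0) + W0t n z t
          + (∑ j ∈ Icc 2 n, (if j = i then s else t j) * W0t n z t ^ j)
          - 2 * Complex.exp (t 1) * (if n = i then s else t n)
          + (if n + 1 = i then s else t (n + 1)) * Complex.exp (t 1) * z 1 := by
    funext s
    simp only [Wunf, W0t_update_t n i z t hi s, Function.update_apply,
      if_neg (show ¬(1 = i) by omega)]
  rw [hfun]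
  have h0 : HasDerivAt (fun s : ℂ => if 0 = i then s else t 0) (if 0 = i then 1 else 0) (t i) := by
    split_ifs with h
    exacts [hasDerivAt_id _, hasDerivAt_const _ _]
  have hsum : HasDerivAt (fun s => ∑ j ∈ Icc 2 n, (if j = i then s else t j) * W0t n z t ^ j)
      (∑ j ∈ Icc 2 n, (if j = i then (1:ℂ) else 0) * W0t n z t ^ j) (t i) := by
    apply HasDerivAt.fun_sum
    intro j _
    split_ifs with h
    · exact (hasDerivAt_id _).mul_const _
    · exact (hasDerivAt_const _ _).mul_const _
  have hmid : HasDerivAt (fun s : ℂ => 2 * Complex.exp (t 1) * (if n = i then s else t n))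
      (if n = i then 2 * Complex.exp (t 1) else 0) (t i) := by
    split_ifs with h
    · simpa using (hasDerivAt_id (t i)).const_mul (2 * Complex.exp (t 1))
    · exact hasDerivAt_const _ _
  have hlast : HasDerivAt (fun s : ℂ => (if n + 1 = i then s else t (n + 1)) * Complex.exp (t 1) * z 1)
      (if n + 1 = i then Complex.exp (t 1) * z 1 else 0) (t i) := by
    split_ifs with h
    · simpa [one_mul] using ((hasDerivAt_id (t i)).mul_const (Complex.exp (t 1))).mul_const (z 1)
    · exact hasDerivAt_const _ _
  exact (((h0.add_const (W0t n z t)).add hsum).sub hmid).add hlast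

/-- derivative of the unfolding in `t 1`. -/
private lemma Wunf_deriv_t1 (n : ℕ) (z t : ℕ → ℂ) (hn : 2 ≤ n) :
    HasDerivAt (fun s => Wunf n z (Function.update t 1 s))
      ((1 + ∑ j ∈ Icc 2 n, (j : ℂ) * t j * W0t n z t ^ (j - 1))
          * (Complex.exp (t 1) * z 1 ^ 2 * z n / ((∏ i ∈ Icc 1 n, z i) - 1))
        - 2 * Complex.exp (t 1) * t n + t (n + 1) * Complex.exp (t 1) * z 1) (t 1) := by
  have hg := W0t_deriv_t1 n z t
  have hfun : (fun s => Wunf n z (Function.update t 1 s))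
      = fun s => t 0 + W0t n z (Function.update t 1 s)
          + (∑ j ∈ Icc 2 n, t j * W0t n z (Function.update t 1 s) ^ j)
          - 2 * Complex.exp s * t n + t (n + 1) * Complex.exp s * z 1 := by
    funext s
    simp only [Wunf, Function.update_self]
    rw [Function.update_of_ne (show (0:ℕ) ≠ 1 by omega),
      Function.update_of_ne (show n ≠ 1 by omega),
      Function.update_of_ne (show n + 1 ≠ 1 by omega)]
    rw [show ∑ j ∈ Icc 2 n, Function.update t 1 s j * W0t n z (Function.update t 1 s) ^ j
        = ∑ j ∈ Icc 2 n, t j * W0t n z (Function.update t 1 s) ^ j from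
      Finset.sum_congr rfl fun j hj => by
        rw [Function.update_of_ne (show j ≠ 1 by simp only [mem_Icc] at hj; omega)]]
  rw [hfun]
  have hsum : HasDerivAt
      (fun s => ∑ j ∈ Icc 2 n, t j * W0t n z (Function.update t 1 s) ^ j)
      (∑ j ∈ Icc 2 n, t j * ((j : ℂ) * W0t n z t ^ (j - 1)
          * (Complex.exp (t 1) * z 1 ^ 2 * z n / ((∏ i ∈ Icc 1 n, z i) - 1)))) (t 1) := by
    apply HasDerivAt.fun_sum
    intro j _
    have := (hg.fun_pow j).const_mul (t j)
    simpa only [Function.update_eq_self] using this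
  have hexp := Complex.hasDerivAt_exp (t 1)
  have hmid : HasDerivAt (fun s : ℂ => 2 * Complex.exp s * t n)
      (2 * Complex.exp (t 1) * t n) (t 1) := (hexp.const_mul 2).mul_const (t n)
  have hlast : HasDerivAt (fun s : ℂ => t (n + 1) * Complex.exp s * z 1)
      (t (n + 1) * Complex.exp (t 1) * z 1) (t 1) := (hexp.const_mul (t (n + 1))).mul_const (z 1)
  have htot := ((((hasDerivAt_const (t 1) (t 0)).fun_add hg).fun_add hsum).fun_sub hmid).fun_add hlast
  refine htot.congr_deriv ?_
  symm
  rw [add_mul, one_mul, Finset.sum_mul, zero_add]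
  rw [show ∑ j ∈ Icc 2 n, ((j : ℂ) * t j * W0t n z t ^ (j - 1))
        * (Complex.exp (t 1) * z 1 ^ 2 * z n / ((∏ i ∈ Icc 1 n, z i) - 1))
      = ∑ j ∈ Icc 2 n, t j * ((j : ℂ) * W0t n z t ^ (j - 1)
        * (Complex.exp (t 1) * z 1 ^ 2 * z n / ((∏ i ∈ Icc 1 n, z i) - 1))) from
    Finset.sum_congr rfl fun j _ => by ring]
/-- derivative of the unfolding in `z k`, `2 ≤ k ≤ n`. -/
private lemma Wunf_deriv_z (n : ℕ) (z t : ℕ → ℂ)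
    (hz : (∏ i ∈ Icc 1 n, z i) ≠ 1) (k : ℕ) (hk2 : 2 ≤ k) (hkn : k ≤ n) :
    HasDerivAt (fun s => Wunf n (Function.update z k s) t)
      ((1 + ∑ j ∈ Icc 2 n, (j : ℂ) * t j * W0t n z t ^ (j - 1))
        * (((if n = k then Complex.exp (t 1) * z 1 ^ 2 else 0) * ((∏ i ∈ Icc 1 n, z i) - 1)
            - Complex.exp (t 1) * z 1 ^ 2 * z n * (∏ i ∈ (Icc 1 n) \ {k}, z i))
            / ((∏ i ∈ Icc 1 n, z i) - 1) ^ 2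
          + (if 2 = k then 1 else 0)
          + ((if k ∈ Icc 2 (n - 1) then z (k + 1) else 0)
            + (if k - 1 ∈ Icc 2 (n - 1) then z (k - 1) else 0)))) (z k) := by
  have hg := W0t_deriv_z n z t hz k hk2 hkn
  set d := (((if n = k then Complex.exp (t 1) * z 1 ^ 2 else 0) * ((∏ i ∈ Icc 1 n, z i) - 1)
            - Complex.exp (t 1) * z 1 ^ 2 * z n * (∏ i ∈ (Icc 1 n) \ {k}, z i))
            / ((∏ i ∈ Icc 1 n, z i) - 1) ^ 2
          + (if 2 = k then 1 else 0)
          + ((if k ∈ Icc 2 (n - 1) then z (k + 1) else 0)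
            + (if k - 1 ∈ Icc 2 (n - 1) then z (k - 1) else 0))) with hd
  have hfun : (fun s => Wunf n (Function.update z k s) t)
      = fun s => t 0 + W0t n (Function.update z k s) t
          + (∑ j ∈ Icc 2 n, t j * W0t n (Function.update z k s) t ^ j)
          - 2 * Complex.exp (t 1) * t n
          + t (n + 1) * Complex.exp (t 1) * z 1 := by
    funext s
    simp only [Wunf, Function.update_of_ne (show (1:ℕ) ≠ k by omega)]
  rw [hfun]
  have hsum : HasDerivAt
      (fun s => ∑ j ∈ Icc 2 n, t j * W0t n (Function.update z k s) t ^ j)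
      (∑ j ∈ Icc 2 n, t j * ((j : ℂ) * W0t n z t ^ (j - 1) * d)) (z k) := by
    apply HasDerivAt.fun_sum
    intro j _
    have := (hg.fun_pow j).const_mul (t j)
    simpa only [Function.update_eq_self] using this
  have htot := ((((hasDerivAt_const (z k) (t 0)).fun_add hg).fun_add hsum).sub_const
      (2 * Complex.exp (t 1) * t n)).add_const (t (n + 1) * Complex.exp (t 1) * z 1)
  refine htot.congr_deriv ?_
  symm
  rw [add_mul, one_mul, Finset.sum_mul, zero_add]
  rw [show ∑ j ∈ Icc 2 n, ((j : ℂ) * t j * W0t n z t ^ (j - 1)) * d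
      = ∑ j ∈ Icc 2 n, t j * ((j : ℂ) * W0t n z t ^ (j - 1) * d) from
    Finset.sum_congr rfl fun j _ => by ring]

/-- derivative of the unfolding in `z 1`. -/
private lemma Wunf_deriv_z1 (n : ℕ) (z t : ℕ → ℂ) (hn : 2 ≤ n)
    (hz : (∏ i ∈ Icc 1 n, z i) ≠ 1) :
    HasDerivAt (fun s => Wunf n (Function.update z 1 s) t)
      ((1 + ∑ j ∈ Icc 2 n, (j : ℂ) * t j * W0t n z t ^ (j - 1))
        * ((Complex.exp (t 1) * (2 * z 1) * z n * ((∏ i ∈ Icc 1 n, z i) - 1)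
            - Complex.exp (t 1) * z 1 ^ 2 * z n * (∏ i ∈ (Icc 1 n) \ {1}, z i))
            / ((∏ i ∈ Icc 1 n, z i) - 1) ^ 2)
        + t (n + 1) * Complex.exp (t 1)) (z 1) := by
  have hg := W0t_deriv_z1 n z t hn hz
  set d := ((Complex.exp (t 1) * (2 * z 1) * z n * ((∏ i ∈ Icc 1 n, z i) - 1)
            - Complex.exp (t 1) * z 1 ^ 2 * z n * (∏ i ∈ (Icc 1 n) \ {1}, z i))
            / ((∏ i ∈ Icc 1 n, z i) - 1) ^ 2) with hd
  have hfun : (fun s => Wunf n (Function.update z 1 s) t)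
      = fun s => t 0 + W0t n (Function.update z 1 s) t
          + (∑ j ∈ Icc 2 n, t j * W0t n (Function.update z 1 s) t ^ j)
          - 2 * Complex.exp (t 1) * t n
          + t (n + 1) * Complex.exp (t 1) * s := by
    funext s
    simp only [Wunf, Function.update_self]
  rw [hfun]
  have hsum : HasDerivAt
      (fun s => ∑ j ∈ Icc 2 n, t j * W0t n (Function.update z 1 s) t ^ j)
      (∑ j ∈ Icc 2 n, t j * ((j : ℂ) * W0t n z t ^ (j - 1) * d)) (z 1) := by
    apply HasDerivAt.fun_sum
    intro j _
    have := (hg.fun_pow j).const_mul (t j)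
    simpa only [Function.update_eq_self] using this
  have hlast : HasDerivAt (fun s : ℂ => t (n + 1) * Complex.exp (t 1) * s)
      (t (n + 1) * Complex.exp (t 1)) (z 1) := by
    simpa using (hasDerivAt_id (z 1)).const_mul (t (n + 1) * Complex.exp (t 1))
  have htot := (((((hasDerivAt_const (z 1) (t 0)).fun_add hg).fun_add hsum).sub_const
      (2 * Complex.exp (t 1) * t n)).fun_add hlast)
  refine htot.congr_deriv ?_
  symm
  rw [add_mul, one_mul, Finset.sum_mul, zero_add]
  rw [show ∑ j ∈ Icc 2 n, ((j : ℂ) * t j * W0t n z t ^ (j - 1)) * d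
      = ∑ j ∈ Icc 2 n, t j * ((j : ℂ) * W0t n z t ^ (j - 1) * d) from
    Finset.sum_congr rfl fun j _ => by ring]
private lemma pairsum (z : ℕ → ℂ) (m : ℕ) :
    (∑ i ∈ Icc 1 m, z (2 * i) * z (2 * i + 1)) + (∑ i ∈ Icc 2 (m + 1), z (2 * i) * z (2 * i - 1))
      = ∑ k ∈ Icc 2 (2 * m + 1), z k * z (k + 1) := by
  induction m with
  | zero => simp
  | succ p ih =>
    rw [Finset.sum_Icc_succ_top (show 1 ≤ p + 1 by omega),
        Finset.sum_Icc_succ_top (show 2 ≤ p + 1 + 1 by omega),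
        show 2 * (p + 1) + 1 = (2 * p + 1) + 1 + 1 by ring,
        Finset.sum_Icc_succ_top (show 2 ≤ (2 * p + 1) + 1 + 1 by omega),
        Finset.sum_Icc_succ_top (show 2 ≤ (2 * p + 1) + 1 by omega),
        ← ih]
    rw [show 2 * (p + 1 + 1) - 1 = 2 * p + 3 by omega,
        show 2 * (p + 1 + 1) = 2 * p + 4 by ring,
        show 2 * (p + 1) = 2 * p + 2 by ring,
        show 2 * p + 1 + 1 = 2 * p + 2 by omega,
        show 2 * p + 2 + 1 = 2 * p + 3 by omega,
        show 2 * p + 3 + 1 = 2 * p + 4 by omega]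
    ring
set_option maxHeartbeats 1000000 in
private lemma tsum_part (n : ℕ) (z t : ℕ → ℂ) (hn : 4 ≤ n) :
    (∑ i ∈ Finset.range (n + 1),
        (1 - (i : ℂ)) * t i * deriv (fun s => Wunf n z (Function.update t i s)) (t i))
      = t 0 + ((∑ j ∈ Icc 2 n, t j * W0t n z t ^ j)
          - (∑ j ∈ Icc 2 n, (j : ℂ) * t j * W0t n z t ^ (j - 1)) * W0t n z t)
        - (1 - (n : ℂ)) * t n * (2 * Complex.exp (t 1)) := by
  have hn2 : 2 ≤ n := by omega
  rw [show Finset.range (n + 1) = insert 0 (insert 1 (Icc 2 n)) from by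
    ext x
    simp only [Finset.mem_range, Finset.mem_insert, Finset.mem_Icc]
    omega]
  simp only [Finset.sum_insert (show (0 : ℕ) ∉ insert 1 (Icc 2 n) from by
      simp only [Finset.mem_insert, Finset.mem_Icc]; omega),
    Finset.sum_insert (show (1 : ℕ) ∉ Icc 2 n from by
      simp only [Finset.mem_Icc]; omega)]
  rw [(Wunf_deriv_t n z t hn2 0 (by omega)).deriv, (Wunf_deriv_t1 n z t hn2).deriv]
  rw [show (∑ i ∈ Icc 2 n,
        (1 - (i : ℂ)) * t i * deriv (fun s => Wunf n z (Function.update t i s)) (t i))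
      = ∑ i ∈ Icc 2 n, ((1 - (i : ℂ)) * t i * W0t n z t ^ i
          - (if i = n then (1 - (i : ℂ)) * t i * (2 * Complex.exp (t 1)) else 0)) from
    Finset.sum_congr rfl fun i hi => by
      simp only [Finset.mem_Icc] at hi
      rw [(Wunf_deriv_t n z t hn2 i (by omega)).deriv,
          if_neg (show ¬(0 = i) by omega), if_neg (show ¬(n + 1 = i) by omega),
          show (∑ j ∈ Icc 2 n, (if j = i then (1 : ℂ) else 0) * W0t n z t ^ j)
            = W0t n z t ^ i from by
            rw [show (∑ j ∈ Icc 2 n, (if j = i then (1 : ℂ) else 0) * W0t n z t ^ j)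
                = ∑ j ∈ Icc 2 n, (if j = i then W0t n z t ^ j else 0) from
              Finset.sum_congr rfl fun j _ => by split_ifs <;> ring]
            rw [Finset.sum_ite_eq' (Icc 2 n) i (fun j => W0t n z t ^ j),
                if_pos (Finset.mem_Icc.mpr ⟨hi.1, hi.2⟩)]]
      by_cases hin : i = n
      · subst hin
        rw [if_pos rfl, if_pos rfl]
        ring
      · rw [if_neg (fun h => hin h.symm), if_neg hin]
        ring]
  rw [Finset.sum_sub_distrib,
      Finset.sum_ite_eq' (Icc 2 n) n (fun i => (1 - (i : ℂ)) * t i * (2 * Complex.exp (t 1))),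
      if_pos (Finset.mem_Icc.mpr ⟨hn2, le_refl n⟩)]
  rw [show (∑ i ∈ Icc 2 n, (1 - (i : ℂ)) * t i * W0t n z t ^ i)
      = (∑ j ∈ Icc 2 n, t j * W0t n z t ^ j)
        - (∑ j ∈ Icc 2 n, (j : ℂ) * t j * W0t n z t ^ (j - 1)) * W0t n z t from by
    rw [Finset.sum_mul, ← Finset.sum_sub_distrib]
    refine Finset.sum_congr rfl fun j hj => ?_
    simp only [Finset.mem_Icc] at hj
    rw [show (j : ℂ) * t j * W0t n z t ^ (j - 1) * W0t n z t
        = (j : ℂ) * t j * W0t n z t ^ j from by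
      rw [mul_assoc, ← pow_succ, Nat.sub_add_cancel (show 1 ≤ j by omega)]]
    ring]
  rw [if_pos rfl, if_neg (show ¬(n = 0) by omega), if_neg (show ¬(n + 1 = 0) by omega),
      Finset.sum_eq_zero (fun j hj => by
        rw [if_neg (show ¬(j = 0) from by simp only [Finset.mem_Icc] at hj; omega), zero_mul])]
  push_cast
  ring

set_option maxHeartbeats 1000000 in
private lemma zsum_part (n m : ℕ) (z t : ℕ → ℂ) (hm2 : 2 ≤ m) (hm : n = m + m)
    (hz : (∏ i ∈ Finset.Icc 1 n, z i) ≠ 1) :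
    (∑ i ∈ Finset.Icc 1 m,
        z (2 * i) * deriv (fun s => Wunf n (Function.update z (2 * i) s) t) (z (2 * i)))
      = (1 + ∑ j ∈ Icc 2 n, (j : ℂ) * t j * W0t n z t ^ (j - 1))
        * (Complex.exp (t 1) * z 1 ^ 2 * z n * ((∏ i ∈ Icc 1 n, z i) - 1)
              / ((∏ i ∈ Icc 1 n, z i) - 1) ^ 2
          - (m : ℂ) * (Complex.exp (t 1) * z 1 ^ 2 * z n * (∏ i ∈ Icc 1 n, z i)
              / ((∏ i ∈ Icc 1 n, z i) - 1) ^ 2)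
          + (W0t n z t
              - Complex.exp (t 1) * z 1 ^ 2 * z n / ((∏ i ∈ Icc 1 n, z i) - 1))) := by
  have hD : (∏ i ∈ Icc 1 n, z i) - 1 ≠ 0 := sub_ne_zero.mpr hz
  rw [show (∑ i ∈ Icc 1 m,
        z (2 * i) * deriv (fun s => Wunf n (Function.update z (2 * i) s) t) (z (2 * i)))
      = ∑ i ∈ Icc 1 m, z (2 * i)
          * ((1 + ∑ j ∈ Icc 2 n, (j : ℂ) * t j * W0t n z t ^ (j - 1))
            * (((if n = 2 * i then Complex.exp (t 1) * z 1 ^ 2 else 0)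
                  * ((∏ j ∈ Icc 1 n, z j) - 1)
                - Complex.exp (t 1) * z 1 ^ 2 * z n * (∏ j ∈ (Icc 1 n) \ {2 * i}, z j))
                / ((∏ j ∈ Icc 1 n, z j) - 1) ^ 2
              + (if 2 = 2 * i then 1 else 0)
              + ((if 2 * i ∈ Icc 2 (n - 1) then z (2 * i + 1) else 0)
                + (if 2 * i - 1 ∈ Icc 2 (n - 1) then z (2 * i - 1) else 0)))) from
    Finset.sum_congr rfl fun i hi => by
      simp only [Finset.mem_Icc] at hi
      rw [(Wunf_deriv_z n z t hz (2 * i) (by omega) (by omega)).deriv]]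
  rw [show (∑ i ∈ Icc 1 m, z (2 * i)
          * ((1 + ∑ j ∈ Icc 2 n, (j : ℂ) * t j * W0t n z t ^ (j - 1))
            * (((if n = 2 * i then Complex.exp (t 1) * z 1 ^ 2 else 0)
                  * ((∏ j ∈ Icc 1 n, z j) - 1)
                - Complex.exp (t 1) * z 1 ^ 2 * z n * (∏ j ∈ (Icc 1 n) \ {2 * i}, z j))
                / ((∏ j ∈ Icc 1 n, z j) - 1) ^ 2
              + (if 2 = 2 * i then 1 else 0)
              + ((if 2 * i ∈ Icc 2 (n - 1) then z (2 * i + 1) else 0)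
                + (if 2 * i - 1 ∈ Icc 2 (n - 1) then z (2 * i - 1) else 0)))))
      = (1 + ∑ j ∈ Icc 2 n, (j : ℂ) * t j * W0t n z t ^ (j - 1))
        * ∑ i ∈ Icc 1 m, z (2 * i)
            * (((if n = 2 * i then Complex.exp (t 1) * z 1 ^ 2 else 0)
                  * ((∏ j ∈ Icc 1 n, z j) - 1)
                - Complex.exp (t 1) * z 1 ^ 2 * z n * (∏ j ∈ (Icc 1 n) \ {2 * i}, z j))
                / ((∏ j ∈ Icc 1 n, z j) - 1) ^ 2
              + (if 2 = 2 * i then 1 else 0)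
              + ((if 2 * i ∈ Icc 2 (n - 1) then z (2 * i + 1) else 0)
                + (if 2 * i - 1 ∈ Icc 2 (n - 1) then z (2 * i - 1) else 0))) from by
    rw [Finset.mul_sum]
    exact Finset.sum_congr rfl fun i _ => by ring]
  congr 1
  rw [show (∑ i ∈ Icc 1 m, z (2 * i)
          * (((if n = 2 * i then Complex.exp (t 1) * z 1 ^ 2 else 0)
                * ((∏ j ∈ Icc 1 n, z j) - 1)
              - Complex.exp (t 1) * z 1 ^ 2 * z n * (∏ j ∈ (Icc 1 n) \ {2 * i}, z j))
              / ((∏ j ∈ Icc 1 n, z j) - 1) ^ 2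
            + (if 2 = 2 * i then 1 else 0)
            + ((if 2 * i ∈ Icc 2 (n - 1) then z (2 * i + 1) else 0)
              + (if 2 * i - 1 ∈ Icc 2 (n - 1) then z (2 * i - 1) else 0))))
      = ∑ i ∈ Icc 1 m,
          (((if i = m then Complex.exp (t 1) * z 1 ^ 2 * z n * ((∏ j ∈ Icc 1 n, z j) - 1)
                / ((∏ j ∈ Icc 1 n, z j) - 1) ^ 2 else 0)
            - Complex.exp (t 1) * z 1 ^ 2 * z n * (∏ j ∈ Icc 1 n, z j)
                / ((∏ j ∈ Icc 1 n, z j) - 1) ^ 2)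
          + (if i = 1 then z 2 else 0)
          + ((if i = m then 0 else z (2 * i) * z (2 * i + 1))
            + (if i = 1 then 0 else z (2 * i) * z (2 * i - 1)))) from
    Finset.sum_congr rfl fun i hi => by
      simp only [Finset.mem_Icc] at hi
      have hmem : 2 * i ∈ Icc 1 n := Finset.mem_Icc.mpr ⟨by omega, by omega⟩
      have hzQ : z (2 * i) * ∏ j ∈ (Icc 1 n) \ {2 * i}, z j = ∏ j ∈ Icc 1 n, z j := by
        rw [← Finset.erase_eq]; exact Finset.mul_prod_erase _ _ hmem
      have hD' : z (2 * i) * ∏ j ∈ (Icc 1 n) \ {2 * i}, z j - 1 ≠ 0 := by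
        rw [hzQ]; exact hD
      by_cases him : i = m
      · rw [if_pos (show n = 2 * i by omega), if_neg (show ¬(2 = 2 * i) by omega),
            if_neg (show (2 * i) ∉ Icc 2 (n - 1) from by simp only [Finset.mem_Icc]; omega),
            if_pos (show 2 * i - 1 ∈ Icc 2 (n - 1) from by simp only [Finset.mem_Icc]; omega),
            if_pos him, if_pos him,
            if_neg (show ¬(i = 1) by omega), if_neg (show ¬(i = 1) by omega)]
        rw [show z n = z (2 * i) from by rw [show n = 2 * i from by omega]]
        rw [← hzQ]
        field_simp
        try ring
      · by_cases hi1 : i = 1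
        · rw [if_neg (show ¬(n = 2 * i) by omega), if_pos (show 2 = 2 * i by omega),
              if_pos (show (2 * i) ∈ Icc 2 (n - 1) from by simp only [Finset.mem_Icc]; omega),
              if_neg (show 2 * i - 1 ∉ Icc 2 (n - 1) from by simp only [Finset.mem_Icc]; omega),
              if_neg him, if_neg him, if_pos hi1, if_pos hi1]
          rw [show z 2 = z (2 * i) from by rw [hi1]]
          rw [← hzQ]
          field_simp
          try ring
        · rw [if_neg (show ¬(n = 2 * i) by omega), if_neg (show ¬(2 = 2 * i) by omega),
              if_pos (show (2 * i) ∈ Icc 2 (n - 1) from by simp only [Finset.mem_Icc]; omega),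
              if_pos (show 2 * i - 1 ∈ Icc 2 (n - 1) from by simp only [Finset.mem_Icc]; omega),
              if_neg him, if_neg him, if_neg hi1, if_neg hi1]
          rw [← hzQ]
          field_simp
          try ring]
  simp only [Finset.sum_add_distrib, Finset.sum_sub_distrib]
  rw [Finset.sum_ite_eq' (Icc 1 m) m
        (fun i => Complex.exp (t 1) * z 1 ^ 2 * z n * ((∏ j ∈ Icc 1 n, z j) - 1)
          / ((∏ j ∈ Icc 1 n, z j) - 1) ^ 2),
      if_pos (Finset.mem_Icc.mpr ⟨by omega, le_refl m⟩),
      Finset.sum_ite_eq' (Icc 1 m) 1 (fun i => z 2),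
      if_pos (Finset.mem_Icc.mpr ⟨le_refl 1, by omega⟩),
      Finset.sum_const, Nat.card_Icc, show m + 1 - 1 = m from by omega, nsmul_eq_mul]
  rw [show (∑ i ∈ Icc 1 m, if i = m then 0 else z (2 * i) * z (2 * i + 1))
      = ∑ i ∈ Icc 1 (m - 1), z (2 * i) * z (2 * i + 1) from by
    rw [show Icc 1 m = insert m (Icc 1 (m - 1)) from by
        ext x; simp only [Finset.mem_insert, Finset.mem_Icc]; omega,
      Finset.sum_insert (show m ∉ Icc 1 (m - 1) from by simp only [Finset.mem_Icc]; omega),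
      if_pos rfl, zero_add]
    exact Finset.sum_congr rfl fun i hi => by
      rw [if_neg (show ¬(i = m) from by simp only [Finset.mem_Icc] at hi; omega)]]
  rw [show (∑ i ∈ Icc 1 m, if i = 1 then 0 else z (2 * i) * z (2 * i - 1))
      = ∑ i ∈ Icc 2 m, z (2 * i) * z (2 * i - 1) from by
    rw [show Icc 1 m = insert 1 (Icc 2 m) from by
        ext x; simp only [Finset.mem_insert, Finset.mem_Icc]; omega,
      Finset.sum_insert (show (1 : ℕ) ∉ Icc 2 m from by simp only [Finset.mem_Icc]; omega),
      if_pos rfl, zero_add]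
    exact Finset.sum_congr rfl fun i hi => by
      rw [if_neg (show ¬(i = 1) from by simp only [Finset.mem_Icc] at hi; omega)]]
  have pp := pairsum z (m - 1)
  rw [show m - 1 + 1 = m from by omega, show 2 * (m - 1) + 1 = n - 1 from by omega] at pp
  rw [pp]
  rw [show W0t n z t - Complex.exp (t 1) * z 1 ^ 2 * z n / ((∏ i ∈ Icc 1 n, z i) - 1)
      = z 2 + ∑ k ∈ Icc 2 (n - 1), z k * z (k + 1) from by
    rw [show W0t n z t = Complex.exp (t 1) * z 1 ^ 2 * z n / ((∏ i ∈ Icc 1 n, z i) - 1)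
        + z 2 + ∑ k ∈ Icc 2 (n - 1), z k * z (k + 1) from rfl]
    ring]
  ring


set_option maxHeartbeats 1000000 in
/-- **The lifted Euler field satisfies `Ẽ(W) = W`** (§3.2).
For even `n ≥ 4`, on the open set `{z₁⋯z_n ≠ 1}`, the first-order differential operator
`Ẽ = n ∂_{t₁} + ∑_{i=0}^{n} (1−i) t_i ∂_{t_i} + (1 − n/2) t_{n+1} ∂_{t_{n+1}}
  − (n/2) z₁ ∂_{z₁} + ∑_{i=1}^{n/2} z_{2i} ∂_{z_{2i}}`
applied to the universal unfolding `W` gives back `W`. -/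
theorem euler_field_lift_of_universal_unfolding (n : ℕ) (hn : 4 ≤ n) (hev : Even n)
    (z t : ℕ → ℂ) (hz : (∏ i ∈ Finset.Icc 1 n, z i) ≠ 1) :
    (n : ℂ) * deriv (fun s => Wunf n z (Function.update t 1 s)) (t 1)
      + (∑ i ∈ Finset.range (n + 1),
          (1 - (i : ℂ)) * t i * deriv (fun s => Wunf n z (Function.update t i s)) (t i))
      + (1 - (n : ℂ) / 2) * t (n + 1)
          * deriv (fun s => Wunf n z (Function.update t (n + 1) s)) (t (n + 1))
      - (n : ℂ) / 2 * z 1 * deriv (fun s => Wunf n (Function.update z 1 s) t) (z 1)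
      + (∑ i ∈ Finset.Icc 1 (n / 2),
          z (2 * i) * deriv (fun s => Wunf n (Function.update z (2 * i) s) t) (z (2 * i)))
      = Wunf n z t := by
  obtain ⟨m, hm⟩ := hev
  have hm2 : 2 ≤ m := by omega
  have hn2 : 2 ≤ n := by omega
  have hD : (∏ i ∈ Icc 1 n, z i) - 1 ≠ 0 := sub_ne_zero.mpr hz
  have h1mem : (1 : ℕ) ∈ Icc 1 n := mem_Icc.mpr ⟨le_refl _, by omega⟩
  have hz1Q : z 1 * ∏ i ∈ (Icc 1 n) \ {1}, z i = ∏ i ∈ Icc 1 n, z i := by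
    rw [← Finset.erase_eq]; exact Finset.mul_prod_erase _ _ h1mem
  have hd_last : deriv (fun s => Wunf n z (Function.update t (n + 1) s)) (t (n + 1))
      = Complex.exp (t 1) * z 1 := by
    rw [(Wunf_deriv_t n z t hn2 (n + 1) (by omega)).deriv,
        if_neg (show ¬(0 = n + 1) by omega), if_neg (show ¬(n = n + 1) by omega), if_pos rfl,
        Finset.sum_eq_zero (fun j hj => by
          rw [if_neg (show ¬(j = n + 1) from by simp only [Finset.mem_Icc] at hj; omega),
            zero_mul])]
    ring
  rw [show n / 2 = m from by omega]
  rw [tsum_part n z t hn, hd_last, zsum_part n m z t hm2 hm hz,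
      (Wunf_deriv_t1 n z t hn2).deriv, (Wunf_deriv_z1 n z t hn2 hz).deriv]
  simp only [Wunf]
  rw [show ((n : ℕ) : ℂ) = 2 * (m : ℂ) from by rw [hm]; push_cast; ring]
  rw [← hz1Q]
  have hD'' : z 1 * (∏ i ∈ (Icc 1 n) \ {1}, z i) - 1 ≠ 0 := by rw [hz1Q]; exact hD
  field_simp
  ring
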